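/- Let H be a finite-dimensional complex inner product space, and let S and T be mutually orthogonal subspaces of H (i.e. ⟪s,t⟫ = 0 for all s ∈ S, t ∈ T). Let v ∈ S and w ∈ T be unit vectors, let m ≥ 1, and let U_1, …, U_m be unitary operators on H each of which maps S into the orthogonal complement of T, i.e. for every i ∈ [m], every s ∈ S and every t ∈ T one has ⟪t, U_i s⟫ = 0. Suppose that ‖w − U_m ⋯ U_1 v‖ ≤ ε for some 0 ≤ ε < 1/2. Define the intermediate states v_i := U_i ⋯ U_1 v for i ∈ [m]. Then there exists i ∈ [m] such that 1 − ‖Π_S v_i‖² − ‖Π_T v_i‖² ≥ ((1 − 2ε)/(2m))², where Π_S and Π_T denote the orthogonal projections onto S and T respectively. -/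

import Mathlib

/-- The state obtained after applying the first `k` of the unitaries `U 0, U 1, …` to `v`. -/
noncomputable def iterApply {H : Type*} [NormedAddCommGroup H] [InnerProductSpace ℂ H]
    (U : ℕ → (H ≃ₗᵢ[ℂ] H)) (v : H) : ℕ → H
  | 0 => v
  | k + 1 => U k (iterApply U v k)

section aux
variable {H : Type*} [NormedAddCommGroup H] [InnerProductSpace ℂ H] [FiniteDimensional ℂ H]

lemma proj_norm_le (K : Submodule ℂ H) (x : H) :
    ‖(Submodule.orthogonalProjectionOnto K x : H)‖ ≤ ‖x‖ := by
  have := (Submodule.orthogonalProjectionOnto K).le_opNorm x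
  have h2 := Submodule.orthogonalProjectionOnto_norm_le K
  calc ‖(Submodule.orthogonalProjectionOnto K x : H)‖ = ‖Submodule.orthogonalProjectionOnto K x‖ := rfl
    _ ≤ ‖Submodule.orthogonalProjectionOnto K‖ * ‖x‖ := this
    _ ≤ 1 * ‖x‖ := by nlinarith [norm_nonneg x]
    _ = ‖x‖ := one_mul _

lemma pyth (S T : Submodule ℂ H)
    (hST : ∀ s ∈ S, ∀ t ∈ T, (inner ℂ s t : ℂ) = 0) (x : H) :
    ‖x - (Submodule.orthogonalProjectionOnto S x : H) - (Submodule.orthogonalProjectionOnto T x : H)‖ ^ 2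
      = ‖x‖ ^ 2 - ‖(Submodule.orthogonalProjectionOnto S x : H)‖ ^ 2
          - ‖(Submodule.orthogonalProjectionOnto T x : H)‖ ^ 2 := by
  set s : H := (Submodule.orthogonalProjectionOnto S x : H)
  set t : H := (Submodule.orthogonalProjectionOnto T x : H)
  have hst : (inner ℂ s t : ℂ) = 0 := hST s (Submodule.orthogonalProjectionOnto S x).2 t (Submodule.orthogonalProjectionOnto T x).2
  have hts : (inner ℂ t s : ℂ) = 0 := by rw [← inner_conj_symm, hst, map_zero]
  have hS : ∀ y ∈ S, (inner ℂ (x - s) y : ℂ) = 0 :=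
    fun y hy => (Submodule.mem_orthogonal' _ _).1 (Submodule.sub_starProjection_mem_orthogonal (K := S) x) y hy
  have hT : ∀ y ∈ T, (inner ℂ (x - t) y : ℂ) = 0 :=
    fun y hy => (Submodule.mem_orthogonal' _ _).1 (Submodule.sub_starProjection_mem_orthogonal (K := T) x) y hy
  have hqr : (inner ℂ (s + t) (x - s - t) : ℂ) = 0 := by
    have h1 : (inner ℂ (x - s - t) s : ℂ) = 0 := by
      have := hS s (Submodule.orthogonalProjectionOnto S x).2
      rw [show x - s - t = (x - s) - t by abel]
      rw [inner_sub_left, this, hts]; ring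
    have h2 : (inner ℂ (x - s - t) t : ℂ) = 0 := by
      have := hT t (Submodule.orthogonalProjectionOnto T x).2
      rw [show x - s - t = (x - t) - s by abel]
      rw [inner_sub_left, this, hst]; ring
    rw [← inner_conj_symm, inner_add_right, h1, h2]; simp
  have hx : x = (s + t) + (x - s - t) := by abel
  have hnq : ‖s + t‖ ^ 2 = ‖s‖ ^ 2 + ‖t‖ ^ 2 :=
    by simpa [pow_two] using norm_add_sq_eq_norm_sq_add_norm_sq_of_inner_eq_zero s t hst
  have hn : ‖x‖ ^ 2 = ‖s + t‖ ^ 2 + ‖x - s - t‖ ^ 2 := by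
    conv_lhs => rw [hx]
    simpa [pow_two] using norm_add_sq_eq_norm_sq_add_norm_sq_of_inner_eq_zero _ _ hqr
  rw [hn, hnq]; ring

end aux


/-- **The Traversal Lemma.** If `S` and `T` are mutually orthogonal subspaces, `v ∈ S` and
`w ∈ T` are unit vectors, and each unitary `U i` maps `S` into the orthogonal complement of `T`,
then any sequence of `m` such unitaries mapping `v` to within `ε < 1/2` of `w` must, at some
step `i ∈ [m]`, produce a state whose overlap with the orthogonal complement of `S + T` is at
least `((1 - 2ε)/(2m))²`. -/
theorem traversal_lemma {H : Type*} [NormedAddCommGroup H] [InnerProductSpace ℂ H]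
    [FiniteDimensional ℂ H]
    (S T : Submodule ℂ H)
    (hST : ∀ s ∈ S, ∀ t ∈ T, (inner ℂ s t : ℂ) = 0)
    (v w : H) (hvS : v ∈ S) (hwT : w ∈ T) (hv : ‖v‖ = 1) (hw : ‖w‖ = 1)
    (m : ℕ) (hm : 1 ≤ m)
    (U : ℕ → (H ≃ₗᵢ[ℂ] H))
    (hU : ∀ i < m, ∀ s ∈ S, ∀ t ∈ T, (inner ℂ t ((U i) s) : ℂ) = 0)
    (ε : ℝ) (hε0 : 0 ≤ ε) (hε : ε < 1 / 2)
    (happrox : ‖w - iterApply U v m‖ ≤ ε) :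
    ∃ i, 1 ≤ i ∧ i ≤ m ∧
      ((1 - 2 * ε) / (2 * m)) ^ 2 ≤
        1 - ‖(Submodule.orthogonalProjectionOnto S (iterApply U v i) : H)‖ ^ 2
          - ‖(Submodule.orthogonalProjectionOnto T (iterApply U v i) : H)‖ ^ 2 := by
  by_contra hcon
  push_neg at hcon
  set δ : ℝ := (1 - 2 * ε) / (2 * m) with hδdef
  have hmpos : (0:ℝ) < m := by exact_mod_cast hm
  have hδpos : 0 < δ := by
    apply div_pos <;> linarith
  set vs : ℕ → H := iterApply U v with hvs
  have hnorm : ∀ i, ‖vs i‖ = 1 := by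
    intro i; induction i with
    | zero => simpa [hvs, iterApply] using hv
    | succ k ih =>
      have : vs (k+1) = U k (vs k) := by simp [hvs, iterApply]
      rw [this, LinearIsometryEquiv.norm_map]; exact ih
  set r : ℕ → H := fun i =>
    vs i - (Submodule.orthogonalProjectionOnto S (vs i) : H) - (Submodule.orthogonalProjectionOnto T (vs i) : H) with hrdef
  have hr2 : ∀ i, ‖r i‖ ^ 2
      = 1 - ‖(Submodule.orthogonalProjectionOnto S (vs i) : H)‖ ^ 2
          - ‖(Submodule.orthogonalProjectionOnto T (vs i) : H)‖ ^ 2 := by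
    intro i
    have := pyth S T hST (vs i)
    rw [hnorm i] at this
    simpa [hrdef] using this
  -- Projection of v onto T is zero
  have hvT : (Submodule.orthogonalProjectionOnto T v : H) = 0 := by
    have hmem : v ∈ Tᗮ := by
      rw [Submodule.mem_orthogonal']
      intro t ht; exact hST v hvS t ht
    simpa using congrArg (Subtype.val) (Submodule.orthogonalProjectionOnto_apply_of_mem_orthogonal hmem)
  have hr0 : r 0 = 0 := by
    have h0 : vs 0 = v := rfl
    have hS0 : (Submodule.orthogonalProjectionOnto S v : H) = v := Submodule.starProjection_eq_self_iff.2 hvS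
    show v - (Submodule.orthogonalProjectionOnto S v : H) - (Submodule.orthogonalProjectionOnto T v : H) = 0
    rw [hS0, hvT]; simp
  have hrle : ∀ i, i ≤ m → ‖r i‖ ≤ δ := by
    intro i him
    rcases Nat.eq_zero_or_pos i with h0 | h1
    · rw [h0, hr0]; simpa using hδpos.le
    · have := hcon i h1 him
      rw [← hr2 i] at this
      nlinarith [norm_nonneg (r i)]
  -- step bound
  have hstep : ∀ i < m, ‖(Submodule.orthogonalProjectionOnto T (vs (i+1)) : H)‖
      ≤ ‖(Submodule.orthogonalProjectionOnto T (vs i) : H)‖ + ‖r i‖ := by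
    intro i him
    have hdecomp : vs (i+1) = U i (Submodule.orthogonalProjectionOnto S (vs i) : H)
        + U i (Submodule.orthogonalProjectionOnto T (vs i) : H) + U i (r i) := by
      have : vs (i+1) = U i (vs i) := by simp [hvs, iterApply]
      rw [this, ← map_add, ← map_add]
      congr 1
      simp [hrdef]
    have hzero : (Submodule.orthogonalProjectionOnto T (U i (Submodule.orthogonalProjectionOnto S (vs i) : H)) : H) = 0 := by
      have hmem : U i (Submodule.orthogonalProjectionOnto S (vs i) : H) ∈ Tᗮ := by
        rw [Submodule.mem_orthogonal]
        intro t ht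
        exact hU i him _ (Submodule.orthogonalProjectionOnto S (vs i)).2 t ht
      simpa using congrArg (Subtype.val)
        (Submodule.orthogonalProjectionOnto_apply_of_mem_orthogonal hmem)
    have heq : (Submodule.orthogonalProjectionOnto T (vs (i+1)) : H)
        = (Submodule.orthogonalProjectionOnto T (U i (Submodule.orthogonalProjectionOnto T (vs i) : H)) : H)
          + (Submodule.orthogonalProjectionOnto T (U i (r i)) : H) := by
      rw [hdecomp, map_add, map_add]
      push_cast
      rw [hzero, zero_add]
    rw [heq]
    calc ‖(Submodule.orthogonalProjectionOnto T (U i (Submodule.orthogonalProjectionOnto T (vs i) : H)) : H)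
          + (Submodule.orthogonalProjectionOnto T (U i (r i)) : H)‖
        ≤ ‖(Submodule.orthogonalProjectionOnto T (U i (Submodule.orthogonalProjectionOnto T (vs i) : H)) : H)‖
          + ‖(Submodule.orthogonalProjectionOnto T (U i (r i)) : H)‖ := norm_add_le _ _
      _ ≤ ‖U i (Submodule.orthogonalProjectionOnto T (vs i) : H)‖ + ‖U i (r i)‖ :=
          add_le_add (proj_norm_le _ _) (proj_norm_le _ _)
      _ = ‖(Submodule.orthogonalProjectionOnto T (vs i) : H)‖ + ‖r i‖ := by
          rw [LinearIsometryEquiv.norm_map, LinearIsometryEquiv.norm_map]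
  -- telescoping
  have htel : ∀ k, k ≤ m → ‖(Submodule.orthogonalProjectionOnto T (vs k) : H)‖ ≤ k * δ := by
    intro k
    induction k with
    | zero =>
      intro _
      have h0 : vs 0 = v := rfl
      simp [h0, hvT]
    | succ k ih =>
      intro hk
      have hk' : k ≤ m := le_of_lt (Nat.lt_of_succ_le hk)
      have := hstep k (Nat.lt_of_succ_le hk)
      have h1 := ih hk'
      have h2 := hrle k hk'
      push_cast
      nlinarith
  -- final bound
  have hwproj : (Submodule.orthogonalProjectionOnto T w : H) = w := Submodule.starProjection_eq_self_iff.2 hwT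
  have hfin : 1 - ε ≤ ‖(Submodule.orthogonalProjectionOnto T (vs m) : H)‖ := by
    have hsub : (Submodule.orthogonalProjectionOnto T (vs m) : H) - w
        = (Submodule.orthogonalProjectionOnto T (vs m - w) : H) := by
      rw [map_sub]; push_cast; rw [hwproj]
    have hle : ‖(Submodule.orthogonalProjectionOnto T (vs m) : H) - w‖ ≤ ε := by
      rw [hsub]
      calc ‖(Submodule.orthogonalProjectionOnto T (vs m - w) : H)‖ ≤ ‖vs m - w‖ := proj_norm_le _ _
        _ = ‖w - vs m‖ := by rw [norm_sub_rev]
        _ ≤ ε := happrox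
    have := norm_sub_norm_le w ((Submodule.orthogonalProjectionOnto T (vs m) : H))
    rw [hw, norm_sub_rev] at this
    calc 1 - ε ≤ 1 - ‖(Submodule.orthogonalProjectionOnto T (vs m) : H) - w‖ := by linarith
      _ ≤ ‖(Submodule.orthogonalProjectionOnto T (vs m) : H)‖ := by linarith
  have hmain := htel m le_rfl
  have hmδ : (m:ℝ) * δ = (1 - 2*ε)/2 := by
    rw [hδdef]; field_simp
  rw [hmδ] at hmain
  linarith
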